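/- arXiv:2605.30799 — 2 statements merged into one kernel-verified Lean document; each statement's English description precedes it below -/
import Mathlib

section
/- There exists a subset S of the dihedral group of order 16, with 1 ∉ S and S closed under inverses, such that the Cayley graph Cay(D(16), S) is isomorphic to the Möbius–Kantor graph MK. -/
/-- The underlying relation of the Möbius–Kantor graph `GP(8,3)`. -/
def mkRel (v w : ZMod 8 × Fin 2) : Bool :=
  (v.2 == 0 && w.2 == 0 && (w.1 == v.1 + 1 || v.1 == w.1 + 1)) ||
  ((v.2 == 0 && w.2 == 1 || v.2 == 1 && w.2 == 0) && v.1 == w.1) ||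
  (v.2 == 1 && w.2 == 1 && (w.1 == v.1 + 3 || v.1 == w.1 + 3))

/-- The Möbius–Kantor graph, i.e. the generalized Petersen graph `GP(8,3)`. -/
def MK : SimpleGraph (ZMod 8 × Fin 2) where
  Adj v w := mkRel v w = true
  symm := ⟨by intro v w; revert v w; decide⟩
  loopless := ⟨by intro v; revert v; decide⟩

/-- The Cayley graph of a group `G` with respect to a connection set `S`
not containing `1` and closed under inverses. -/
def cayleyGraph {G : Type*} [Group G] (S : Set G)
    (h1 : (1 : G) ∉ S) (hinv : ∀ s ∈ S, s⁻¹ ∈ S) : SimpleGraph G where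
  Adj x y := x⁻¹ * y ∈ S
  symm := ⟨by
    intro x y h
    have := hinv _ h
    simpa [_root_.mul_inv_rev] using this⟩
  loopless := ⟨by
    intro x h
    simp only [inv_mul_cancel] at h
    exact h1 h⟩

open DihedralGroup in
/-- Connection set for the Möbius–Kantor graph in `D(16)`. -/
def connS : Set (DihedralGroup 8) := fun x => x = sr 0 ∨ x = sr 1 ∨ x = sr 3

instance : DecidablePred (· ∈ connS) := fun x =>
  inferInstanceAs (Decidable (_ ∨ _))

open DihedralGroup in
/-- The bijection `D(16) ≃ V(MK)`. -/
def mkEquiv : DihedralGroup 8 ≃ ZMod 8 × Fin 2 where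
  toFun x := match x with
    | r 0 => (0, 0) | r 1 => (1, 1) | r 2 => (7, 1) | r 3 => (2, 0)
    | r 4 => (4, 0) | r 5 => (5, 1) | r 6 => (3, 1) | r 7 => (6, 0)
    | sr 0 => (1, 0) | sr 1 => (7, 0) | sr 2 => (6, 1) | sr 3 => (0, 1)
    | sr 4 => (5, 0) | sr 5 => (3, 0) | sr 6 => (2, 1) | sr 7 => (4, 1)
  invFun v := match v with
    | (0, 0) => r 0 | (1, 1) => r 1 | (7, 1) => r 2 | (2, 0) => r 3
    | (4, 0) => r 4 | (5, 1) => r 5 | (3, 1) => r 6 | (6, 0) => r 7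
    | (1, 0) => sr 0 | (7, 0) => sr 1 | (6, 1) => sr 2 | (0, 1) => sr 3
    | (5, 0) => sr 4 | (3, 0) => sr 5 | (2, 1) => sr 6 | (4, 1) => sr 7
  left_inv := by decide
  right_inv := by decide

instance : DecidableRel MK.Adj := fun v w =>
  inferInstanceAs (Decidable (mkRel v w = true))

lemma connS_one : (1 : DihedralGroup 8) ∉ connS := by decide
lemma connS_inv : ∀ s ∈ connS, s⁻¹ ∈ connS := by decide

instance : DecidableRel (cayleyGraph connS connS_one connS_inv).Adj := fun a b =>
  inferInstanceAs (Decidable (a⁻¹ * b ∈ connS))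

/-- The Möbius–Kantor graph is a Cayley graph of the dihedral group of order 16. -/
theorem moebiusKantor_cayley_dihedral :
    ∃ (S : Set (DihedralGroup 8)) (h1 : (1 : DihedralGroup 8) ∉ S)
      (hinv : ∀ s ∈ S, s⁻¹ ∈ S),
      Nonempty (cayleyGraph S h1 hinv ≃g MK) := by
  refine ⟨connS, connS_one, connS_inv, ⟨⟨mkEquiv, ?_⟩⟩⟩
  intro a b
  exact (by decide :
    ∀ a b, MK.Adj (mkEquiv a) (mkEquiv b) ↔ (cayleyGraph connS connS_one connS_inv).Adj a b) a b
end

section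
/- Let G be a finite simple graph on n vertices, let λ₁ ≤ λ₂ ≤ … ≤ λₙ be the eigenvalues of its Kirchhoff Laplacian arranged in increasing order, and let d₁ ≤ d₂ ≤ … ≤ dₙ be the vertex degrees arranged in increasing order, with the convention d₀ = 0. Then λₖ ≤ dₖ + dₖ₋₁ for every k with 1 ≤ k ≤ n. -/
open Polynomial

open Finset Matrix



lemma myCharpolyHermitian {V : Type*} [Fintype V] [DecidableEq V]
    (A : Matrix V V ℝ) (hA : A.IsHermitian) :
    A.charpoly = ∏ i : V, (X - C (hA.eigenvalues i)) := by
  set U : Matrix V V ℝ := (hA.eigenvectorUnitary : Matrix V V ℝ) with hU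
  set D : Matrix V V ℝ := Matrix.diagonal (RCLike.ofReal ∘ hA.eigenvalues) with hDdef
  have hUV : U * star U = 1 := Unitary.coe_mul_star_self _
  have hD : D = Matrix.diagonal hA.eigenvalues := by
    simp [hDdef, RCLike.ofReal_real_eq_id]
  have hspec : A = U * D * star U := hA.spectral_theorem
  set f : Matrix V V ℝ →+* Matrix V V ℝ[X] := (C : ℝ →+* ℝ[X]).mapMatrix with hf
  have hcomm : ∀ M : Matrix V V ℝ[X], Matrix.scalar V (X : ℝ[X]) * M
      = M * Matrix.scalar V (X : ℝ[X]) := fun M =>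
    (scalar_commute (X : ℝ[X]) (fun r => Commute.all X r) M).eq
  have hch : charmatrix A = f U * charmatrix D * f (star U) := by
    show Matrix.scalar V (X : ℝ[X]) - f A
        = f U * (Matrix.scalar V (X : ℝ[X]) - f D) * f (star U)
    rw [hspec, _root_.map_mul, _root_.map_mul, mul_sub, sub_mul]
    congr 1
    rw [← hcomm, mul_assoc, ← _root_.map_mul, hUV, _root_.map_one, mul_one]
  have hdet1 : (f U).det * (f (star U)).det = 1 := by
    rw [← det_mul, ← _root_.map_mul, hUV, _root_.map_one, det_one]
  have hchD : charmatrix D = Matrix.diagonal (fun i => X - C (hA.eigenvalues i)) := by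
    ext i j
    by_cases h : i = j
    · subst h
      rw [charmatrix_apply_eq, diagonal_apply_eq, hD, diagonal_apply_eq]
    · rw [charmatrix_apply_ne _ _ _ h, diagonal_apply_ne _ h, hD, diagonal_apply_ne _ h,
        _root_.map_zero, neg_zero]
  calc A.charpoly = (f U * charmatrix D * f (star U)).det := by rw [Matrix.charpoly, hch]
    _ = (f U).det * (f (star U)).det * (charmatrix D).det := by rw [det_mul, det_mul]; ring
    _ = (charmatrix D).det := by rw [hdet1, one_mul]
    _ = ∏ i : V, (X - C (hA.eigenvalues i)) := by rw [hchD, det_diagonal]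


lemma myQuadBound {V : Type*} [Fintype V] [DecidableEq V]
    (G : SimpleGraph V) [DecidableRel G.Adj] (S : Finset V) (c : ℝ) (hc : 0 ≤ c)
    (hdeg : ∀ u v, G.Adj u v →
      (if u ∈ S then (G.degree u : ℝ) else 0) + (if v ∈ S then (G.degree v : ℝ) else 0) ≤ c)
    (x : V → ℝ) (hx : ∀ v ∉ S, x v = 0) :
    x ⬝ᵥ (G.lapMatrix ℝ *ᵥ x) ≤ c * (x ⬝ᵥ x) := by
  classical
  set z : V → V → ℝ := fun u v => if G.Adj u v then x u - x v else 0 with hz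
  have hzsymm : ∀ u v, z v u = - z u v := by
    intro u v
    simp only [hz]
    by_cases h : G.Adj u v
    · rw [if_pos h, if_pos h.symm]; ring
    · rw [if_neg h, if_neg (fun h' => h h'.symm), neg_zero]
  set Z : ℝ := ∑ u : V, ∑ v : V, (z u v)^2 with hZ
  have hZnn : 0 ≤ Z := by positivity
  -- quadratic form = Z/2
  have hQ : x ⬝ᵥ (G.lapMatrix ℝ *ᵥ x) = Z / 2 := by
    rw [← Matrix.toLinearMap₂'_apply', SimpleGraph.lapMatrix_toLinearMap₂']
    congr 1
    refine Finset.sum_congr rfl fun u _ => Finset.sum_congr rfl fun v _ => ?_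
    simp only [hz]
    by_cases h : G.Adj u v <;> simp [h]
  -- |x|^2
  have hxx : x ⬝ᵥ x = ∑ v : V, (x v)^2 := by
    simp [dotProduct, sq]
  have hxxnn : 0 ≤ x ⬝ᵥ x := by rw [hxx]; positivity
  set g : V → ℝ := fun u => ∑ v : V, z u v with hg
  -- Step 1 : Z = ∑ u ∈ S, x u * (2 * g u)
  have step1 : Z = ∑ u ∈ S, x u * (2 * g u) := by
    have e1 : Z = ∑ u : V, ∑ v : V, z u v * (x u - x v) := by
      refine Finset.sum_congr rfl fun u _ => Finset.sum_congr rfl fun v _ => ?_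
      simp only [hz]
      by_cases h : G.Adj u v <;> simp [h, sq]
    have e2 : ∑ u : V, ∑ v : V, z u v * x v = - ∑ u : V, ∑ v : V, z u v * x u := by
      rw [Finset.sum_comm]
      rw [← Finset.sum_neg_distrib]
      refine Finset.sum_congr rfl fun v _ => ?_
      rw [← Finset.sum_neg_distrib]
      refine Finset.sum_congr rfl fun u _ => ?_
      rw [hzsymm u v]; ring
    have e3 : Z = ∑ u : V, x u * (2 * g u) := by
      rw [e1]
      have : ∀ u : V, ∑ v : V, z u v * (x u - x v)
          = (∑ v : V, z u v * x u) - (∑ v : V, z u v * x v) := by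
        intro u
        rw [← Finset.sum_sub_distrib]
        exact Finset.sum_congr rfl fun v _ => by ring
      simp_rw [this]
      rw [Finset.sum_sub_distrib, e2, sub_neg_eq_add, ← Finset.sum_add_distrib]
      refine Finset.sum_congr rfl fun u _ => ?_
      simp only [hg, Finset.mul_sum]
      rw [← Finset.sum_add_distrib]
      refine Finset.sum_congr rfl fun v _ => by ring
    rw [e3]
    symm
    apply Finset.sum_subset (Finset.subset_univ S)
    intro u _ hu
    rw [hx u hu, zero_mul]
  -- Step 3 : Cauchy-Schwarz outer
  have step3 : Z^2 ≤ (x ⬝ᵥ x) * (∑ u ∈ S, (2 * g u)^2) := by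
    calc Z^2 = (∑ u ∈ S, x u * (2 * g u))^2 := by rw [step1]
      _ ≤ (∑ u ∈ S, (x u)^2) * (∑ u ∈ S, (2 * g u)^2) :=
          Finset.sum_mul_sq_le_sq_mul_sq S _ _
      _ ≤ (x ⬝ᵥ x) * (∑ u ∈ S, (2 * g u)^2) := by
          apply mul_le_mul_of_nonneg_right _ (by positivity)
          rw [hxx]
          exact Finset.sum_le_sum_of_subset_of_nonneg (Finset.subset_univ S)
            (fun v _ _ => sq_nonneg _)
  -- Step 4 : inner Cauchy-Schwarz
  have step4 : ∀ u : V, (g u)^2 ≤ (G.degree u : ℝ) * ∑ v : V, (z u v)^2 := by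
    intro u
    have e1 : g u = ∑ v : V, (if G.Adj u v then (1:ℝ) else 0) * z u v := by
      refine Finset.sum_congr rfl fun v _ => ?_
      simp only [hz]
      by_cases h : G.Adj u v <;> simp [h]
    have e2 : ∑ v : V, (if G.Adj u v then (1:ℝ) else 0)^2 = (G.degree u : ℝ) := by
      rw [G.degree_eq_sum_if_adj u]
      refine Finset.sum_congr rfl fun v _ => ?_
      by_cases h : G.Adj u v <;> simp [h]
    calc (g u)^2 = (∑ v : V, (if G.Adj u v then (1:ℝ) else 0) * z u v)^2 := by rw [e1]
      _ ≤ (∑ v : V, (if G.Adj u v then (1:ℝ) else 0)^2) * ∑ v : V, (z u v)^2 :=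
          Finset.sum_mul_sq_le_sq_mul_sq _ _ _
      _ = (G.degree u : ℝ) * ∑ v : V, (z u v)^2 := by rw [e2]
  -- Step 5/6 : bound ∑_{u∈S} (2g u)^2 ≤ 2 c Z
  set w : V → ℝ := fun u => if u ∈ S then (G.degree u : ℝ) else 0 with hw
  have hwnn : ∀ u, 0 ≤ w u := by
    intro u; simp only [hw]; by_cases h : u ∈ S <;> simp [h]
  have step5 : ∑ u ∈ S, (2 * g u)^2 ≤ 4 * ∑ u : V, ∑ v : V, w u * (z u v)^2 := by
    have e1 : ∑ u ∈ S, (2 * g u)^2 = 4 * ∑ u ∈ S, (g u)^2 := by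
      rw [Finset.mul_sum]
      exact Finset.sum_congr rfl fun u _ => by ring
    rw [e1]
    have e2 : ∑ u ∈ S, (g u)^2 ≤ ∑ u ∈ S, (G.degree u : ℝ) * ∑ v : V, (z u v)^2 :=
      Finset.sum_le_sum fun u _ => step4 u
    have e3 : ∑ u ∈ S, (G.degree u : ℝ) * ∑ v : V, (z u v)^2
        = ∑ u : V, ∑ v : V, w u * (z u v)^2 := by
      have e4 : ∑ u ∈ S, (G.degree u : ℝ) * ∑ v : V, (z u v)^2
          = ∑ u : V, w u * ∑ v : V, (z u v)^2 := by
        rw [show ∑ u ∈ S, (G.degree u : ℝ) * ∑ v : V, (z u v)^2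
            = ∑ u ∈ S, w u * ∑ v : V, (z u v)^2 from
          Finset.sum_congr rfl fun u hu => by simp only [hw, if_pos hu]]
        apply Finset.sum_subset (Finset.subset_univ S)
        intro u _ hu
        simp only [hw, if_neg hu, zero_mul]
      rw [e4]
      exact Finset.sum_congr rfl fun u _ => Finset.mul_sum _ _ _
    calc 4 * ∑ u ∈ S, (g u)^2 ≤ 4 * ∑ u ∈ S, (G.degree u : ℝ) * ∑ v : V, (z u v)^2 := by
          linarith [e2]
      _ = 4 * ∑ u : V, ∑ v : V, w u * (z u v)^2 := by rw [e3]
  -- Step 6 : symmetrization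
  have step6 : 2 * ∑ u : V, ∑ v : V, w u * (z u v)^2 ≤ c * Z := by
    have esym : ∑ u : V, ∑ v : V, w u * (z u v)^2 = ∑ u : V, ∑ v : V, w v * (z u v)^2 := by
      rw [Finset.sum_comm]
      refine Finset.sum_congr rfl fun u _ => Finset.sum_congr rfl fun v _ => ?_
      rw [hzsymm u v, neg_sq]
    have e1 : 2 * ∑ u : V, ∑ v : V, w u * (z u v)^2
        = ∑ u : V, ∑ v : V, (w u + w v) * (z u v)^2 := by
      rw [two_mul]
      nth_rewrite 2 [esym]
      rw [← Finset.sum_add_distrib]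
      refine Finset.sum_congr rfl fun u _ => ?_
      rw [← Finset.sum_add_distrib]
      refine Finset.sum_congr rfl fun v _ => by ring
    rw [e1, hZ, Finset.mul_sum]
    refine Finset.sum_le_sum fun u _ => ?_
    rw [Finset.mul_sum]
    refine Finset.sum_le_sum fun v _ => ?_
    by_cases h : G.Adj u v
    · exact mul_le_mul_of_nonneg_right (by simpa only [hw] using hdeg u v h) (sq_nonneg _)
    · simp only [hz, if_neg h]
      simp [hwnn u, hwnn v]
  -- combine
  have key : Z^2 ≤ (x ⬝ᵥ x) * (2 * c * Z) := by
    calc Z^2 ≤ (x ⬝ᵥ x) * (∑ u ∈ S, (2 * g u)^2) := step3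
      _ ≤ (x ⬝ᵥ x) * (2 * c * Z) := by
          apply mul_le_mul_of_nonneg_left _ hxxnn
          calc ∑ u ∈ S, (2 * g u)^2 ≤ 4 * ∑ u : V, ∑ v : V, w u * (z u v)^2 := step5
            _ ≤ 2 * (c * Z) := by linarith [step6]
            _ = 2 * c * Z := by ring
  rw [hQ]
  rcases eq_or_lt_of_le hZnn with h0 | hpos
  · rw [← h0, zero_div]
    exact mul_nonneg hc hxxnn
  · nlinarith [key, hpos, hxxnn]


lemma myDotSum {V ι : Type*} [Fintype V] (s : Finset ι) (f : ι → V → ℝ) (x : V → ℝ) :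
    x ⬝ᵥ (∑ i ∈ s, f i) = ∑ i ∈ s, x ⬝ᵥ f i := by
  simp only [dotProduct, Finset.sum_apply, Finset.mul_sum]
  rw [Finset.sum_comm]

lemma mySumDot {V ι : Type*} [Fintype V] (s : Finset ι) (f : ι → V → ℝ) (x : V → ℝ) :
    (∑ i ∈ s, f i) ⬝ᵥ x = ∑ i ∈ s, f i ⬝ᵥ x := by
  simp only [dotProduct, Finset.sum_apply, Finset.sum_mul]
  rw [Finset.sum_comm]

lemma myFinrankSpan {K M ι : Type*} [Field K] [AddCommGroup M] [Module K M] [DecidableEq M]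
    (b : Module.Basis ι K M) (T : Finset ι) :
    Module.finrank K (Submodule.span K ((T.image b : Finset M) : Set M)) = T.card := by
  rw [finrank_span_finset_eq_card, Finset.card_image_of_injective _ b.injective]
  have h1 : LinearIndependent K ((↑) : Set.range b → M) :=
    b.linearIndependent.linearIndepOn_id
  apply LinearIndepOn.mono (v := id) h1
  intro y hy
  obtain ⟨i, _, rfl⟩ := Finset.mem_image.mp (Finset.mem_coe.mp hy)
  exact Set.mem_range_self i



/-- **Spectral bound for the Kirchhoff Laplacian.**  If `lam 1 ≤ … ≤ lam n` are the
eigenvalues of the Kirchhoff Laplacian of a finite simple graph `G` on `n` vertices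
(listed with multiplicity, so that the characteristic polynomial is
`∏ k in Icc 1 n, (X - C (lam k))`), and `d 1 ≤ … ≤ d n` are the vertex degrees in
increasing order, with the convention `d 0 = 0`, then `lam k ≤ d k + d (k-1)` for all
`1 ≤ k ≤ n`. -/
theorem laplacian_eigenvalue_le_degree_sum
    {V : Type*} [Fintype V] [DecidableEq V] (G : SimpleGraph V) [DecidableRel G.Adj]
    (n : ℕ) (hn : n = Fintype.card V)
    (lam : ℕ → ℝ)
    (hlam_mono : ∀ i j, 1 ≤ i → i ≤ j → j ≤ n → lam i ≤ lam j)
    (hlam : (G.lapMatrix ℝ).charpoly = ∏ k ∈ Finset.Icc 1 n, (X - C (lam k)))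
    (d : ℕ → ℝ)
    (hd0 : d 0 = 0)
    (hd_mono : ∀ i j, 1 ≤ i → i ≤ j → j ≤ n → d i ≤ d j)
    (hd : ∃ e : V ≃ Fin n, ∀ v : V, (G.degree v : ℝ) = d ((e v : ℕ) + 1))
    (k : ℕ) (hk1 : 1 ≤ k) (hkn : k ≤ n) :
    lam k ≤ d k + d (k - 1) := by
  classical
  obtain ⟨e, he⟩ := hd
  set A : Matrix V V ℝ := G.lapMatrix ℝ with hA_def
  have hA : A.IsHermitian := (SimpleGraph.posSemidef_lapMatrix ℝ G).1
  set μ : V → ℝ := hA.eigenvalues with hμ_def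
  set c : ℝ := d k + d (k - 1) with hc_def
  -- nonnegativity of relevant degrees
  have hd_nonneg : ∀ j, 1 ≤ j → j ≤ n → 0 ≤ d j := by
    intro j h1 h2
    have hlt : j - 1 < n := by omega
    have h3 := he (e.symm ⟨j - 1, hlt⟩)
    rw [Equiv.apply_symm_apply] at h3
    have hj1 : ((⟨j - 1, hlt⟩ : Fin n) : ℕ) + 1 = j := by simp; omega
    rw [hj1] at h3
    rw [← h3]
    positivity
  have hdk1 : 0 ≤ d (k - 1) := by
    rcases Nat.eq_or_lt_of_le hk1 with h | h
    · rw [← h]; simp [hd0]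
    · exact hd_nonneg _ (by omega) (by omega)
  have hck : 0 ≤ c := add_nonneg (hd_nonneg k hk1 hkn) hdk1
  -- the set of k vertices of smallest degree
  set S : Finset V := Finset.univ.filter (fun v => (e v : ℕ) < k) with hS_def
  have hmemS : ∀ v, v ∈ S ↔ (e v : ℕ) < k := by
    intro v; simp [hS_def]
  have hcardS : S.card = k := by
    apply Finset.card_eq_of_bijective (fun i hi => e.symm ⟨i, by omega⟩)
    · intro v hv
      refine ⟨(e v : ℕ), (hmemS v).mp hv, ?_⟩
      simp
    · intro i hi
      rw [hmemS]
      rw [Equiv.apply_symm_apply]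
      exact hi
    · intro i j hi hj hij
      have := congrArg e hij
      rw [Equiv.apply_symm_apply, Equiv.apply_symm_apply] at this
      exact Fin.mk.inj_iff.mp this
  -- degree bounds on S
  have hdegS : ∀ v ∈ S, (G.degree v : ℝ) ≤ d k := by
    intro v hv
    rw [he v]
    exact hd_mono _ _ (by omega) (by have := (hmemS v).mp hv; omega) hkn
  have hdeg2 : ∀ u v, G.Adj u v →
      (if u ∈ S then (G.degree u : ℝ) else 0) + (if v ∈ S then (G.degree v : ℝ) else 0) ≤ c := by
    intro u v huv
    by_cases hu : u ∈ S <;> by_cases hv : v ∈ S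
    · -- both in S : degrees are two distinct entries among d 1 .. d k
      rw [if_pos hu, if_pos hv]
      have hne : (e u : ℕ) ≠ (e v : ℕ) := by
        intro h
        exact G.ne_of_adj huv (e.injective (Fin.ext h))
      have hu' := (hmemS u).mp hu
      have hv' := (hmemS v).mp hv
      have hk2 : 2 ≤ k := by omega
      rcases Nat.lt_or_ge (e u : ℕ) (e v : ℕ) with hlt | hge
      · have h1 : (G.degree u : ℝ) ≤ d (k - 1) := by
          rw [he u]; exact hd_mono _ _ (by omega) (by omega) (by omega)
        have h2 : (G.degree v : ℝ) ≤ d k := hdegS v hv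
        rw [hc_def]; linarith
      · have hlt : (e v : ℕ) < (e u : ℕ) := by omega
        have h1 : (G.degree v : ℝ) ≤ d (k - 1) := by
          rw [he v]; exact hd_mono _ _ (by omega) (by omega) (by omega)
        have h2 : (G.degree u : ℝ) ≤ d k := hdegS u hu
        rw [hc_def]; linarith
    · rw [if_pos hu, if_neg hv, add_zero, hc_def]
      linarith [hdegS u hu]
    · rw [if_neg hu, if_pos hv, zero_add, hc_def]
      linarith [hdegS v hv]
    · rw [if_neg hu, if_neg hv, add_zero, hc_def]
      exact hck
  -- multiset of eigenvalues equals multiset of lam values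
  have hms : Finset.univ.val.map μ = (Finset.Icc 1 n).val.map lam := by
    have hch : ((Finset.univ.val.map μ).map (fun a : ℝ => X - C a)).prod
        = (((Finset.Icc 1 n).val.map lam).map (fun a : ℝ => X - C a)).prod := by
      rw [Multiset.map_map, Multiset.map_map]
      have h1 : A.charpoly = ∏ i : V, (X - C (μ i)) := myCharpolyHermitian A hA
      have h2 := hlam
      rw [h1] at h2
      rw [Finset.prod_eq_multiset_prod] at h2
      rw [Finset.prod_eq_multiset_prod (Finset.Icc 1 n)] at h2
      exact h2
    have := congrArg Polynomial.roots hch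
    rwa [Polynomial.roots_multiset_prod_X_sub_C, Polynomial.roots_multiset_prod_X_sub_C] at this
  -- the set of eigenvalue indices with eigenvalue ≥ lam k
  set T : Finset V := Finset.univ.filter (fun i => lam k ≤ μ i) with hT_def
  have hlamT : ∀ i ∈ T, lam k ≤ μ i := by
    intro i hi
    exact (Finset.mem_filter.mp hi).2
  have hcardT : n + 1 - k ≤ T.card := by
    have hcount := congrArg (Multiset.countP (fun a : ℝ => lam k ≤ a)) hms
    rw [Multiset.countP_map, Multiset.countP_map] at hcount
    have hTeq : T.card = Multiset.card (Finset.univ.val.filter (fun i => lam k ≤ μ i)) := by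
      rw [hT_def]; rfl
    have hIeq : Multiset.card ((Finset.Icc 1 n).val.filter (fun j => lam k ≤ lam j))
        = ((Finset.Icc 1 n).filter (fun j => lam k ≤ lam j)).card := rfl
    have hsub : Finset.Icc k n ⊆ (Finset.Icc 1 n).filter (fun j => lam k ≤ lam j) := by
      intro j hj
      rw [Finset.mem_Icc] at hj
      rw [Finset.mem_filter, Finset.mem_Icc]
      exact ⟨⟨by omega, hj.2⟩, hlam_mono k j hk1 hj.1 hj.2⟩
    have hcard2 := Finset.card_le_card hsub
    rw [Nat.card_Icc] at hcard2
    omega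
  -- subspaces
  set bE : Module.Basis V ℝ (EuclideanSpace ℝ V) := (EuclideanSpace.basisFun V ℝ).toBasis with hbE_def
  set b : OrthonormalBasis V ℝ (EuclideanSpace ℝ V) := hA.eigenvectorBasis with hb_def
  set U : Submodule ℝ (EuclideanSpace ℝ V) :=
    Submodule.span ℝ ((S.image bE : Finset (EuclideanSpace ℝ V)) : Set (EuclideanSpace ℝ V))
    with hU_def
  set W : Submodule ℝ (EuclideanSpace ℝ V) :=
    Submodule.span ℝ ((T.image b.toBasis : Finset (EuclideanSpace ℝ V)) :
      Set (EuclideanSpace ℝ V)) with hW_def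
  have hfrU : Module.finrank ℝ U = k := by rw [hU_def, myFinrankSpan, hcardS]
  have hfrW : Module.finrank ℝ W = T.card := by rw [hW_def, myFinrankSpan]
  have hfrtot : Module.finrank ℝ (EuclideanSpace ℝ V) = n := by
    rw [finrank_euclideanSpace, hn]
  -- nontrivial intersection
  have hsum := Submodule.finrank_sup_add_finrank_inf_eq U W
  have hle : Module.finrank ℝ ↥(U ⊔ W) ≤ n := hfrtot ▸ Submodule.finrank_le _
  have hpos : 0 < Module.finrank ℝ ↥(U ⊓ W) := by omega
  have hne : U ⊓ W ≠ ⊥ := by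
    intro h
    rw [h, finrank_bot] at hpos
    omega
  obtain ⟨x, hxmem, hxne⟩ := Submodule.exists_mem_ne_zero_of_ne_bot hne
  have hxU : x ∈ U := (Submodule.mem_inf.mp hxmem).1
  have hxW : x ∈ W := (Submodule.mem_inf.mp hxmem).2
  -- x is supported on S
  have hsupp : ∀ v ∉ S, x v = 0 := by
    set K : Submodule ℝ (EuclideanSpace ℝ V) :=
      { carrier := {y : EuclideanSpace ℝ V | ∀ v ∉ S, y v = 0}
        add_mem' := by
          intro a b ha hb v hv
          have h1 := ha v hv
          have h2 := hb v hv
          show (a + b) v = 0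
          rw [PiLp.add_apply, h1, h2, add_zero]
        zero_mem' := by
          intro v hv
          rfl
        smul_mem' := by
          intro r a ha v hv
          have h1 := ha v hv
          show (r • a) v = 0
          rw [PiLp.smul_apply, h1, smul_zero] } with hK_def
    have hUK : U ≤ K := by
      rw [hU_def, Submodule.span_le]
      intro y hy v hv
      obtain ⟨u, hu, rfl⟩ := Finset.mem_image.mp (Finset.mem_coe.mp hy)
      have hvu : v ≠ u := fun h => hv (h ▸ hu)
      show bE u v = 0
      rw [hbE_def, OrthonormalBasis.coe_toBasis, EuclideanSpace.basisFun_apply,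
        EuclideanSpace.single_apply, if_neg hvu]
    exact fun v hv => hUK hxU v hv
  -- expansion of x in the eigenvector basis
  obtain ⟨fc, -, hfc⟩ := Submodule.mem_span_finset.mp hxW
  rw [Finset.sum_image (fun i _ j _ h => b.toBasis.injective h)] at hfc
  set cc : V → ℝ := fun i => fc (b.toBasis i) with hcc_def
  have hrep : (∑ i ∈ T, cc i • b i : EuclideanSpace ℝ V) = x := by
    rw [← hfc]
    exact Finset.sum_congr rfl fun i _ => by simp [hcc_def, OrthonormalBasis.coe_toBasis]
  have hxfun : (x : V → ℝ) = ∑ i ∈ T, cc i • (⇑(b i) : V → ℝ) := by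
    funext v
    rw [← hrep]
    simp [Finset.sum_apply]
  -- orthonormality in dot-product form
  have hON : ∀ i j : V, (⇑(b i) : V → ℝ) ⬝ᵥ (⇑(b j) : V → ℝ) = if i = j then 1 else 0 := by
    intro i j
    have h := orthonormal_iff_ite.mp b.orthonormal i j
    simpa [PiLp.inner_apply, RCLike.inner_apply, dotProduct, mul_comm] using h
  -- quadratic form on x
  have hAx : A *ᵥ (x : V → ℝ) = ∑ i ∈ T, (cc i * μ i) • (⇑(b i) : V → ℝ) := by
    rw [hxfun, ← Matrix.mulVecLin_apply, map_sum]
    refine Finset.sum_congr rfl fun i _ => ?_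
    rw [_root_.map_smul, Matrix.mulVecLin_apply, hb_def, hA.mulVec_eigenvectorBasis, smul_smul]
  have hQx : (x : V → ℝ) ⬝ᵥ (A *ᵥ (x : V → ℝ)) = ∑ i ∈ T, μ i * (cc i)^2 := by
    rw [hAx, hxfun, mySumDot]
    refine Finset.sum_congr rfl fun i hi => ?_
    rw [smul_dotProduct, myDotSum]
    rw [Finset.sum_eq_single i]
    · rw [dotProduct_smul, hON, if_pos rfl]
      simp; ring
    · intro j hj hji
      rw [dotProduct_smul, hON, if_neg (fun h => hji h.symm)]
      simp
    · intro h; exact absurd hi h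
  have hxx : (x : V → ℝ) ⬝ᵥ (x : V → ℝ) = ∑ i ∈ T, (cc i)^2 := by
    nth_rewrite 1 [hxfun]
    rw [mySumDot, hxfun]
    refine Finset.sum_congr rfl fun i hi => ?_
    rw [smul_dotProduct, myDotSum]
    rw [Finset.sum_eq_single i]
    · rw [dotProduct_smul, hON, if_pos rfl]
      simp; ring
    · intro j hj hji
      rw [dotProduct_smul, hON, if_neg (fun h => hji h.symm)]
      simp
    · intro h; exact absurd hi h
  -- lower bound
  have hlow : lam k * ((x : V → ℝ) ⬝ᵥ (x : V → ℝ)) ≤ (x : V → ℝ) ⬝ᵥ (A *ᵥ (x : V → ℝ)) := by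
    rw [hQx, hxx, Finset.mul_sum]
    exact Finset.sum_le_sum fun i hi =>
      mul_le_mul_of_nonneg_right (hlamT i hi) (sq_nonneg _)
  -- upper bound
  have hup : (x : V → ℝ) ⬝ᵥ (A *ᵥ (x : V → ℝ)) ≤ c * ((x : V → ℝ) ⬝ᵥ (x : V → ℝ)) :=
    myQuadBound G S c hck hdeg2 (x : V → ℝ) hsupp
  -- positivity of the norm
  have hxxpos : 0 < (x : V → ℝ) ⬝ᵥ (x : V → ℝ) := by
    have hnz : ∃ v, (x : V → ℝ) v ≠ 0 := by
      by_contra h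
      push_neg at h
      apply hxne
      ext v
      exact h v
    obtain ⟨v, hv⟩ := hnz
    have : (x : V → ℝ) ⬝ᵥ (x : V → ℝ) = ∑ w : V, (x w)^2 := by
      simp [dotProduct, sq]
    rw [this]
    apply Finset.sum_pos' (fun w _ => sq_nonneg _) ⟨v, Finset.mem_univ v, by positivity⟩
  nlinarith [hlow, hup, hxxpos]
end
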